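/- Consider m clients with quadratic objectives f_i(x) = (1/2)‖A_i^{1/2}(x - c_i)‖² where each A_i is symmetric positive definite. For any η > 0 and β ≥ 0, one round of FedProx (each client performs H local proximal-gradient steps x_{i,ℓ+1} = x_{i,ℓ} - η(∇f_i(x_{i,ℓ}) + β(x_{i,ℓ} - x̄_t)), x_{i,0} = x̄_t, followed by averaging x̄_{t+1} = (1/m)∑ x_{i,H}) equals one step of gradient descent with step size η on the surrogate function f̃(x) = (1/m)∑_i (1/2)(x - c_i)'Q_iA_i(x - c_i), where Q_i = ∑_{ℓ=0}^{H-1}(I - η(A_i + βI))^ℓ. -/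

import Mathlib

open Finset RealInnerProductSpace

namespace FedProxAux

variable {d : ℕ}

lemma tE_mul (M N : Matrix (Fin d) (Fin d) ℝ) (v : EuclideanSpace ℝ (Fin d)) :
    Matrix.toEuclideanLin (M * N) v = Matrix.toEuclideanLin M (Matrix.toEuclideanLin N v) := by
  simp [Matrix.toEuclideanLin_apply, Matrix.mulVec_mulVec]

lemma tE_add (M N : Matrix (Fin d) (Fin d) ℝ) (v : EuclideanSpace ℝ (Fin d)) :
    Matrix.toEuclideanLin (M + N) v = Matrix.toEuclideanLin M v + Matrix.toEuclideanLin N v := by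
  simp [map_add]

lemma tE_sub (M N : Matrix (Fin d) (Fin d) ℝ) (v : EuclideanSpace ℝ (Fin d)) :
    Matrix.toEuclideanLin (M - N) v = Matrix.toEuclideanLin M v - Matrix.toEuclideanLin N v := by
  simp [map_sub]

lemma tE_smul (r : ℝ) (M : Matrix (Fin d) (Fin d) ℝ) (v : EuclideanSpace ℝ (Fin d)) :
    Matrix.toEuclideanLin (r • M) v = r • Matrix.toEuclideanLin M v := by
  simp [map_smul]

lemma tE_one (v : EuclideanSpace ℝ (Fin d)) :
    Matrix.toEuclideanLin (1 : Matrix (Fin d) (Fin d) ℝ) v = v := by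
  simp [Matrix.toEuclideanLin_apply, Matrix.one_mulVec]

lemma quad_grad (M : Matrix (Fin d) (Fin d) ℝ) (hM : M.IsHermitian)
    (cc y : EuclideanSpace ℝ (Fin d)) :
    HasGradientAt (fun x : EuclideanSpace ℝ (Fin d) =>
        (1 / 2) * ⟪Matrix.toEuclideanLin M (x - cc), x - cc⟫)
      (Matrix.toEuclideanLin M (y - cc)) y := by
  have hsymm : (Matrix.toEuclideanLin M).IsSymmetric :=
    Matrix.isHermitian_iff_isSymmetric.1 hM
  set T : EuclideanSpace ℝ (Fin d) →L[ℝ] EuclideanSpace ℝ (Fin d) :=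
    LinearMap.toContinuousLinearMap (Matrix.toEuclideanLin M) with hT
  have h1 : HasFDerivAt (fun x : EuclideanSpace ℝ (Fin d) => x - cc)
      (ContinuousLinearMap.id ℝ (EuclideanSpace ℝ (Fin d))) y :=
    (hasFDerivAt_id y).sub_const cc
  have h2 : HasFDerivAt (fun x : EuclideanSpace ℝ (Fin d) => T (x - cc)) T y := by
    have := T.hasFDerivAt.comp y h1
    simpa [Function.comp_def] using this
  have h3 := (h2.inner (𝕜 := ℝ) h1).const_mul (1/2 : ℝ)
  rw [hasGradientAt_iff_hasFDerivAt]
  refine h3.congr_fderiv ?_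
  ext h
  have hs : ⟪T h, y - cc⟫ = ⟪T (y - cc), h⟫ := by
    rw [show T h = Matrix.toEuclideanLin M h from rfl,
      show T (y - cc) = Matrix.toEuclideanLin M (y - cc) from rfl,
      hsymm h (y - cc)]
    exact real_inner_comm _ _
  simp only [ContinuousLinearMap.coe_smul', Pi.smul_apply, ContinuousLinearMap.coe_comp',
    Function.comp_apply, ContinuousLinearMap.prod_apply, ContinuousLinearMap.coe_id', id_eq,
    fderivInnerCLM_apply, InnerProductSpace.toDual_apply_apply, smul_eq_mul, hs]
  rw [show T (y - cc) = Matrix.toEuclideanLin M (y - cc) from rfl]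
  ring

end FedProxAux

/-- Proposition 1: for quadratic client objectives
`fᵢ(x) = (1/2)(x - cᵢ)'Aᵢ(x - cᵢ)` with `Aᵢ` symmetric positive definite, one round of
FedProx (each client performs `H` local proximal-gradient steps followed by averaging)
equals one step of gradient descent with step size `η` on the surrogate
`f̃(x) = (1/m)∑ᵢ (1/2)(x - cᵢ)'QᵢAᵢ(x - cᵢ)`, where
`Qᵢ = ∑_{ℓ=0}^{H-1}(I - η(Aᵢ + βI))^ℓ`. -/
theorem fedprox_round_is_gd_on_surrogate {d m H : ℕ} (hm : 0 < m)
    (η β : ℝ) (hη : 0 < η) (hβ : 0 ≤ β)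
    (A : Fin m → Matrix (Fin d) (Fin d) ℝ)
    (hA : ∀ i, (A i).PosDef)
    (c : Fin m → EuclideanSpace ℝ (Fin d))
    (f : Fin m → EuclideanSpace ℝ (Fin d) → ℝ)
    (hf : ∀ i x, f i x = (1 / 2) * ⟪Matrix.toEuclideanLin (A i) (x - c i), x - c i⟫)
    (Q : Fin m → Matrix (Fin d) (Fin d) ℝ)
    (hQ : ∀ i, Q i = ∑ ℓ ∈ Finset.range H, (1 - η • (A i + β • 1)) ^ ℓ)
    (ftilde : EuclideanSpace ℝ (Fin d) → ℝ)
    (hftilde : ∀ x, ftilde x = (1 / (m : ℝ)) *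
      ∑ i, (1 / 2) * ⟪Matrix.toEuclideanLin (Q i * A i) (x - c i), x - c i⟫)
    (xbar : EuclideanSpace ℝ (Fin d))
    (x : Fin m → ℕ → EuclideanSpace ℝ (Fin d))
    (hx0 : ∀ i, x i 0 = xbar)
    (hrec : ∀ i, ∀ ℓ < H, x i (ℓ + 1) =
      x i ℓ - η • (gradient (f i) (x i ℓ) + β • (x i ℓ - xbar))) :
    (1 / (m : ℝ)) • ∑ i, x i H = xbar - η • gradient ftilde xbar := by

  have hAH : ∀ i, (A i).IsHermitian := fun i => (hA i).1
  set B : Fin m → Matrix (Fin d) (Fin d) ℝ := fun i => 1 - η • (A i + β • 1) with hB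
  -- commutation and hermitian facts
  have hcomm : ∀ i, Commute (A i) (B i) := by
    intro i
    have h1 : Commute (A i) (1 : Matrix (Fin d) (Fin d) ℝ) := Commute.one_right _
    exact h1.sub_right (((Commute.refl (A i)).add_right (h1.smul_right β)).smul_right η)
  have hQA : ∀ i, (Q i * A i).IsHermitian := by
    intro i
    have hBH : (B i).IsHermitian := by
      have ht : (A i).transpose = A i := (hAH i).eq
      show Matrix.conjTranspose (B i) = B i
      simp [hB, Matrix.conjTranspose_smul, ht]
    have hQH : (Q i).IsHermitian := by
      rw [hQ i]
      show Matrix.conjTranspose _ = _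
      rw [Matrix.conjTranspose_sum]
      exact Finset.sum_congr rfl (fun ℓ _ => hBH.pow ℓ)
    have hcQ : Commute (A i) (Q i) := by
      rw [hQ i]
      exact Commute.sum_right _ _ _ (fun ℓ _ => (hcomm i).pow_right ℓ)
    show Matrix.conjTranspose (Q i * A i) = Q i * A i
    rw [Matrix.conjTranspose_mul, (hAH i).eq, hQH.eq, hcQ.eq]
  -- gradient of the client objectives
  have hgradf : ∀ i y, gradient (f i) y = Matrix.toEuclideanLin (A i) (y - c i) := by
    intro i y
    have hfe : f i = fun x => (1 / 2) * ⟪Matrix.toEuclideanLin (A i) (x - c i), x - c i⟫ :=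
      funext (hf i)
    rw [hfe]
    exact (FedProxAux.quad_grad (A i) (hAH i) (c i) y).gradient
  -- closed form for the local iterates
  have key : ∀ i, ∀ ℓ, ℓ ≤ H → x i ℓ =
      xbar - η • Matrix.toEuclideanLin ((∑ k ∈ Finset.range ℓ, B i ^ k) * A i) (xbar - c i) := by
    intro i ℓ
    induction ℓ with
    | zero =>
      intro _
      simp [hx0 i]
    | succ ℓ ih =>
      intro hℓ
      have hℓ' : ℓ < H := hℓ
      rw [hrec i ℓ hℓ', ih (le_of_lt hℓ'), hgradf]
      rw [geom_sum_succ]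
      simp only [hB, sub_mul, add_mul, one_mul, mul_one, mul_assoc, smul_mul_assoc,
        FedProxAux.tE_mul, FedProxAux.tE_add, FedProxAux.tE_sub, FedProxAux.tE_smul,
        FedProxAux.tE_one, map_sub, map_smul, map_add,
        LinearMap.sub_apply, LinearMap.add_apply, LinearMap.smul_apply]
      module
  have hxH : ∀ i, x i H = xbar - η • Matrix.toEuclideanLin (Q i * A i) (xbar - c i) := by
    intro i
    rw [hQ i]
    exact key i H le_rfl
  -- gradient of the surrogate
  have hgradft : gradient ftilde xbar =
      (1 / (m : ℝ)) • ∑ i, Matrix.toEuclideanLin (Q i * A i) (xbar - c i) := by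
    have hterm : ∀ i ∈ Finset.univ, HasFDerivAt
        (fun x : EuclideanSpace ℝ (Fin d) =>
          (1 / 2) * ⟪Matrix.toEuclideanLin (Q i * A i) (x - c i), x - c i⟫)
        (InnerProductSpace.toDual ℝ (EuclideanSpace ℝ (Fin d))
          (Matrix.toEuclideanLin (Q i * A i) (xbar - c i))) xbar :=
      fun i _ => (FedProxAux.quad_grad (Q i * A i) (hQA i) (c i) xbar).hasFDerivAt
    have hmul := (HasFDerivAt.fun_sum hterm).const_mul (1 / (m : ℝ))
    have hfe : ftilde = fun x => (1 / (m : ℝ)) *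
        ∑ i, (1 / 2) * ⟪Matrix.toEuclideanLin (Q i * A i) (x - c i), x - c i⟫ :=
      funext hftilde
    rw [hfe]
    refine HasGradientAt.gradient ?_
    rw [hasGradientAt_iff_hasFDerivAt]
    refine hmul.congr_fderiv ?_
    rw [map_smul, map_sum]
  rw [hgradft]
  simp only [hxH]
  rw [Finset.sum_sub_distrib, Finset.sum_const, Finset.card_univ, Fintype.card_fin,
    ← Finset.smul_sum, smul_sub, ← Nat.cast_smul_eq_nsmul ℝ, smul_smul, smul_smul]
  have hm' : (m : ℝ) ≠ 0 := Nat.cast_ne_zero.2 hm.ne'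
  rw [one_div, inv_mul_cancel₀ hm', one_smul]
  congr 1
  rw [smul_smul, mul_comm, ← smul_smul]
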